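/- If the sequence α = {α_n} is real, then the operator 𝗁_{φ,ψ}^α = S_ψ^{1/2} H_{φ,ψ}^α S_φ^{1/2} is self-adjoint on the Hilbert space H. -/

import Mathlib

noncomputable section

open ContinuousLinearMap

local notation "⟪" x ", " y "⟫" => @inner ℂ _ _ x y

private lemma coeff_unique {H : Type*} [NormedAddCommGroup H] [InnerProductSpace ℂ H]
    [CompleteSpace H] (e : HilbertBasis ℕ ℂ H) (c : ℕ → ℂ) (x : H)
    (h : HasSum (fun n => c n • e n) x) (m : ℕ) : c m = ⟪e m, x⟫ := by
  have h2 := (innerSL ℂ (e m)).hasSum h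
  simp only [innerSL_apply_apply] at h2
  have h3 : (fun n => (⟪e m, c n • e n⟫ : ℂ)) = fun n => if n = m then c m else 0 := by
    funext n
    by_cases hnm : n = m
    · subst hnm; simp [inner_smul_right, orthonormal_iff_ite.mp e.orthonormal, e.orthonormal.1 n]
    · simp only [inner_smul_right, orthonormal_iff_ite.mp e.orthonormal, if_neg hnm]
      rw [if_neg (fun hmn : m = n => hnm hmn.symm), mul_zero]
  rw [h3] at h2
  have h4 := HasSum.unique (hasSum_ite_eq m (c m)) h2
  exact h4

set_option maxHeartbeats 1000000 in
set_option synthInstance.maxHeartbeats 1000000 in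
private lemma half_lemma {H : Type*} [NormedAddCommGroup H] [InnerProductSpace ℂ H]
    [CompleteSpace H] (a b s t : H →L[ℂ] H) (ha : a.IsPositive) (hb : b.IsPositive)
    (has : a * a = s) (hbt : b * b = t) (hst : s * t = 1) (hts : t * s = 1)
    (hssa : star s = s) : a = b * s ∧ b * a = 1 ∧ a * b = 1 := by
  have hbsa : star b = b := hb.isSelfAdjoint
  have hca : (s * b) * b = 1 := by rw [mul_assoc, hbt, hst]
  have hbc : b * (b * s) = 1 := by rw [← mul_assoc, hbt, hts]
  have hcomm : s * b = b * s := by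
    have h1 : s * b = (s * b) * (b * (b * s)) := by rw [hbc, mul_one]
    rw [h1, ← mul_assoc, hca, one_mul]
  have hcbb : (b * s) * b = 1 := by rw [← hcomm, hca]
  have hcsa : star (b * s) = b * s := by rw [star_mul, hssa, hbsa, hcomm]
  have hcc : (b * s) * (b * s) = s := by
    nth_rewrite 1 [← hcomm]
    rw [mul_assoc s b (b * s), hbc, mul_one]
  have hcpos : (b * s).IsPositive := by
    refine isPositive_def'.mpr ⟨hcsa, fun x => ?_⟩
    have hx : b ((b * s) x) = x := by
      rw [show b ((b * s) x) = (b * (b * s)) x from rfl, hbc, one_apply_eq_self]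
    rw [reApplyInnerSelf_apply]
    calc (0:ℝ) ≤ RCLike.re ⟪b ((b * s) x), (b * s) x⟫ := hb.re_inner_nonneg_left _
      _ = RCLike.re ⟪(b * s) x, b ((b * s) x)⟫ := inner_re_symm _ _
      _ = RCLike.re ⟪(b * s) x, x⟫ := by rw [hx]
  have h1 : CFC.sqrt s = a := CFC.sqrt_unique has ((nonneg_iff_isPositive a).2 ha)
  have h2 : CFC.sqrt s = b * s := CFC.sqrt_unique hcc ((nonneg_iff_isPositive (b * s)).2 hcpos)
  have hab : a = b * s := by rw [← h1, h2]
  refine ⟨hab, ?_, ?_⟩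
  · rw [hab]; exact hbc
  · rw [hab]; exact hcbb

private lemma main_aux {H : Type*} [NormedAddCommGroup H] [InnerProductSpace ℂ H]
    [CompleteSpace H] (e : HilbertBasis ℕ ℂ H) (Tc b W : H →L[ℂ] H) (α : ℕ → ℝ)
    (hWadj : star W = b * Tc) (hW1 : (b * Tc) * W = 1) (hW2 : W * (b * Tc) = 1) (g h : H) :
    (∀ f k : H, HasSum (fun n => ((α n : ℂ) * ⟪e n, W f⟫) • Tc (e n)) k →
        ⟪g, b k⟫ = ⟪h, f⟫) ↔
      ∃ k : H, HasSum (fun n => ((α n : ℂ) * ⟪e n, W g⟫) • Tc (e n)) k ∧ b k = h := by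
  have hadj : adjoint W = star W := rfl
  have hiop : ∀ x y : H, ⟪x, b (Tc y)⟫ = ⟪W x, y⟫ := by
    intro x y
    have hby : b (Tc y) = star W y := by rw [hWadj]; rfl
    rw [hby, ← hadj, adjoint_inner_right]
  have hWbt : ∀ x : H, W (b (Tc x)) = x := by
    intro x
    rw [show W (b (Tc x)) = (W * (b * Tc)) x from rfl, hW2, one_apply_eq_self]
  constructor
  · intro P
    have key : ∀ m, (α m : ℂ) * ⟪e m, W g⟫ = ⟪e m, W h⟫ := by
      intro m
      have hsum : HasSum (fun n => ((α n : ℂ) * ⟪e n, W (b (Tc (e m)))⟫) • Tc (e n))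
          ((α m : ℂ) • Tc (e m)) := by
        have heq : (fun n => ((α n : ℂ) * ⟪e n, W (b (Tc (e m)))⟫) • Tc (e n))
            = fun n => if n = m then (α m : ℂ) • Tc (e m) else 0 := by
          funext n
          rw [hWbt, orthonormal_iff_ite.mp e.orthonormal]
          by_cases hnm : n = m
          · subst hnm; simp
          · simp [hnm]
        rw [heq]
        exact hasSum_ite_eq m _
      have hP := P (b (Tc (e m))) ((α m : ℂ) • Tc (e m)) hsum
      have hL : ⟪g, b ((α m : ℂ) • Tc (e m))⟫ = (α m : ℂ) * ⟪W g, e m⟫ := by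
        rw [map_smul, inner_smul_right, hiop]
      have hR : ⟪h, b (Tc (e m))⟫ = ⟪W h, e m⟫ := hiop h (e m)
      rw [hL, hR] at hP
      have := congrArg (starRingEnd ℂ) hP
      simpa [inner_conj_symm, Complex.conj_ofReal] using this
    have hrepr : HasSum (fun n => (⟪e n, W h⟫ : ℂ) • e n) (W h) := by
      simpa [e.repr_apply_apply] using e.hasSum_repr (W h)
    have hrepr' : HasSum (fun n => ((α n : ℂ) * ⟪e n, W g⟫) • e n) (W h) := by
      simpa only [key] using hrepr
    refine ⟨Tc (W h), ?_, ?_⟩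
    · simpa only [map_smul] using Tc.hasSum hrepr'
    · rw [show b (Tc (W h)) = ((b * Tc) * W) h from rfl, hW1, one_apply_eq_self]
  · rintro ⟨k₀, hk₀, hbk₀⟩ f k hk
    have hscal : ∀ (x s : H), HasSum (fun n => ((α n : ℂ) * ⟪e n, W x⟫) • Tc (e n)) s →
        HasSum (fun n => ((α n : ℂ) * ⟪e n, W x⟫) • e n) (W (b s)) := by
      intro x s hs
      have h1 := W.hasSum (b.hasSum hs)
      simpa only [map_smul, hWbt] using h1
    have hk₀' := hscal g k₀ hk₀
    have hk' := hscal f k hk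
    have hcoef : ∀ n, (⟪e n, W (b k₀)⟫ : ℂ) = (α n : ℂ) * ⟪e n, W g⟫ :=
      fun n => (coeff_unique e _ _ hk₀' n).symm
    have hWh : W h = W (b k₀) := by rw [hbk₀]
    have hsWW : ∀ x y : H, (⟪x, y⟫ : ℂ) = ⟪W x, W y⟫ := by
      intro x y
      have : y = star W (W y) := by
        rw [hWadj, show (b * Tc) (W y) = ((b * Tc) * W) y from rfl, hW1, one_apply_eq_self]
      conv_lhs => rw [this]
      rw [← hadj, adjoint_inner_right]
    have h1 : ⟪g, b k⟫ = ⟪W g, W (b k)⟫ := hsWW g (b k)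
    have h2 : ⟪h, f⟫ = ⟪W h, W f⟫ := hsWW h f
    have s1 : HasSum (fun n => ((α n : ℂ) * ⟪e n, W f⟫) * ⟪W g, e n⟫) ⟪W g, W (b k)⟫ := by
      have := (innerSL ℂ (W g)).hasSum hk'
      simpa only [innerSL_apply_apply, inner_smul_right, mul_comm] using this
    have hreprf : HasSum (fun n => (⟪e n, W f⟫ : ℂ) • e n) (W f) := by
      simpa [e.repr_apply_apply] using e.hasSum_repr (W f)
    have s2 : HasSum (fun n => (⟪e n, W f⟫ : ℂ) * ⟪W h, e n⟫) ⟪W h, W f⟫ := by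
      have := (innerSL ℂ (W h)).hasSum hreprf
      simpa only [innerSL_apply_apply, inner_smul_right, mul_comm] using this
    have s2' : HasSum (fun n => ((α n : ℂ) * ⟪e n, W f⟫) * ⟪W g, e n⟫) ⟪W h, W f⟫ := by
      have heq : (fun n => (⟪e n, W f⟫ : ℂ) * ⟪W h, e n⟫)
          = fun n => ((α n : ℂ) * ⟪e n, W f⟫) * ⟪W g, e n⟫ := by
        funext n
        have hcn : (⟪W h, e n⟫ : ℂ) = (α n : ℂ) * ⟪W g, e n⟫ := by
          rw [← inner_conj_symm (W h) (e n), hWh, hcoef n]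
          simp [Complex.conj_ofReal]
        rw [hcn]
        ring
      rw [← heq]
      exact s2
    rw [h1, h2]
    exact HasSum.unique s1 s2'

set_option maxHeartbeats 1000000 in
set_option synthInstance.maxHeartbeats 1000000 in
theorem h_selfadjoint_for_real_alpha
    {H : Type*} [NormedAddCommGroup H] [InnerProductSpace ℂ H] [CompleteSpace H]
    (e : HilbertBasis ℕ ℂ H) (T : H ≃L[ℂ] H) (φ ψ : ℕ → H)
    (hφ : ∀ n, φ n = T (e n))
    (hψ : ∀ n, ψ n = adjoint (T.symm : H →L[ℂ] H) (e n)) (α : ℕ → ℝ)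
    (Sφhalf Sψhalf : H →L[ℂ] H)
    (hSφhalf : Sφhalf.IsPositive)
    (hSψhalf : Sψhalf.IsPositive)
    (hSφsq : Sφhalf * Sφhalf = (T : H →L[ℂ] H) * adjoint (T : H →L[ℂ] H))
    (hSψsq : Sψhalf * Sψhalf = adjoint (T.symm : H →L[ℂ] H) * (T.symm : H →L[ℂ] H)) :
    ∀ g h : H,
      (∀ f k : H, HasSum (fun n => ((α n : ℂ) * ⟪ψ n, Sφhalf f⟫) • φ n) k →
          ⟪g, Sψhalf k⟫ = ⟪h, f⟫) ↔
        ∃ k : H, HasSum (fun n => ((α n : ℂ) * ⟪ψ n, Sφhalf g⟫) • φ n) k ∧ Sψhalf k = h := by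
  intro g h
  rw [show adjoint ((T : H →L[ℂ] H)) = star ((T : H →L[ℂ] H)) from rfl] at hSφsq
  rw [show adjoint ((T.symm : H →L[ℂ] H)) = star ((T.symm : H →L[ℂ] H)) from rfl] at hSψsq
  have hTcTi : (T : H →L[ℂ] H) * (T.symm : H →L[ℂ] H) = 1 := by ext x; simp
  have hTiTc : (T.symm : H →L[ℂ] H) * (T : H →L[ℂ] H) = 1 := by ext x; simp
  have hφψ : ((T : H →L[ℂ] H) * star (T : H →L[ℂ] H))
      * (star (T.symm : H →L[ℂ] H) * (T.symm : H →L[ℂ] H)) = 1 := by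
    rw [mul_assoc, ← mul_assoc (star (T : H →L[ℂ] H)), ← star_mul, hTiTc, star_one, one_mul,
      hTcTi]
  have hψφ : (star (T.symm : H →L[ℂ] H) * (T.symm : H →L[ℂ] H))
      * ((T : H →L[ℂ] H) * star (T : H →L[ℂ] H)) = 1 := by
    rw [mul_assoc, ← mul_assoc (T.symm : H →L[ℂ] H), hTiTc, one_mul, ← star_mul, hTcTi,
      star_one]
  have hssa : star ((T : H →L[ℂ] H) * star (T : H →L[ℂ] H))
      = (T : H →L[ℂ] H) * star (T : H →L[ℂ] H) := by rw [star_mul, star_star]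
  obtain ⟨hab, hbs, hsb⟩ :=
    half_lemma Sφhalf Sψhalf _ _ hSφhalf hSψhalf hSφsq hSψsq hφψ hψφ hssa
  -- the unitary W = T⁻¹ ∘ Sφhalf
  have hWadj : star ((T.symm : H →L[ℂ] H) * Sφhalf) = Sψhalf * (T : H →L[ℂ] H) := by
    rw [star_mul, hSφhalf.isSelfAdjoint.star_eq, hab, mul_assoc, mul_assoc, ← star_mul,
      hTiTc, star_one, mul_one]
  have hW1 : (Sψhalf * (T : H →L[ℂ] H)) * ((T.symm : H →L[ℂ] H) * Sφhalf) = 1 := by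
    rw [mul_assoc, ← mul_assoc (T : H →L[ℂ] H), hTcTi, one_mul, hbs]
  have hW2 : ((T.symm : H →L[ℂ] H) * Sφhalf) * (Sψhalf * (T : H →L[ℂ] H)) = 1 := by
    rw [mul_assoc, ← mul_assoc Sφhalf, hsb, one_mul, hTiTc]
  have hterm : ∀ f : H, (fun n => ((α n : ℂ) * ⟪ψ n, Sφhalf f⟫) • φ n)
      = fun n => ((α n : ℂ) * ⟪e n, ((T.symm : H →L[ℂ] H) * Sφhalf) f⟫)
          • (T : H →L[ℂ] H) (e n) := by
    intro f
    funext n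
    rw [hφ, hψ, adjoint_inner_left]
    rfl
  simp only [hterm]
  exact main_aux e (T : H →L[ℂ] H) Sψhalf ((T.symm : H →L[ℂ] H) * Sφhalf) α hWadj hW1 hW2 g h
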